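/- For 0 < α < 1 and 0 < σ < 1, there is a constant C = C(α,σ) such that for all integers n ≥ 2: Σ_{k=1}^{⌈n/2⌉−1} k^{σ−2} (n−k+1)^{−α−1} ≤ C n^{−(1+α)}; and for 1 < σ ≤ 2: Σ_{k=1}^{⌈n/2⌉−1} k^{σ−2} (n−k+1)^{−α−1} ≤ C n^{−2−α+σ}. -/

import Mathlib

open Real Finset

private lemma bern_step (q : ℝ) (hq0 : 0 < q) (hq1 : q ≤ 1) (x : ℝ) (hx : 0 ≤ x) :
    q * (x + 1) ^ (q - 1) ≤ (x + 1) ^ q - x ^ q := by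
  have hxp : (0:ℝ) < x + 1 := by linarith
  have hs : (-1:ℝ) ≤ -1 / (x + 1) := by
    rw [neg_div, neg_le_neg_iff]
    rw [div_le_one hxp]; linarith
  have hB := rpow_one_add_le_one_add_mul_self hs hq0.le hq1
  have h1 : (1 + -1 / (x + 1)) = x / (x + 1) := by field_simp; ring
  rw [h1] at hB
  have h2 : (x / (x + 1)) ^ q = x ^ q / (x + 1) ^ q :=
    Real.div_rpow hx hxp.le q
  rw [h2] at hB
  have hpow : (0:ℝ) < (x + 1) ^ q := rpow_pos_of_pos hxp q
  have h3 : x ^ q ≤ (1 + q * (-1 / (x + 1))) * (x + 1) ^ q := by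
    rw [← div_le_iff₀ hpow] at *; exact hB
  have h4 : (x + 1) ^ (q - 1) = (x + 1) ^ q / (x + 1) := by
    rw [rpow_sub hxp, rpow_one]
  rw [h4]
  have : (1 + q * (-1 / (x + 1))) * (x + 1) ^ q
      = (x + 1) ^ q - q * ((x + 1) ^ q / (x + 1)) := by
    field_simp; ring
  nlinarith [h3]

private lemma sum_rpow_le (q : ℝ) (hq0 : 0 < q) (hq1 : q ≤ 1) (m : ℕ) :
    ∑ k ∈ Finset.Icc 1 m, (k : ℝ) ^ (q - 1) ≤ (m : ℝ) ^ q / q := by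
  induction m with
  | zero => simp [Real.zero_rpow hq0.ne']
  | succ m ih =>
    rw [Finset.sum_Icc_succ_top (by omega : 1 ≤ m + 1)]
    have hb := bern_step q hq0 hq1 (m : ℝ) (Nat.cast_nonneg m)
    have hih : (∑ k ∈ Finset.Icc 1 m, (k : ℝ) ^ (q - 1)) * q ≤ (m : ℝ) ^ q := by
      rw [← le_div_iff₀ hq0]; exact ih
    rw [le_div_iff₀ hq0]
    push_cast
    nlinarith [hb, hih]

theorem L1_half_sum_bounds (α σ : ℝ) (hα0 : 0 < α) (hα1 : α < 1) :
    ∃ C : ℝ, 0 < C ∧ ∀ n : ℕ, 2 ≤ n →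
      ((0 < σ ∧ σ < 1 →
        ∑ k ∈ Finset.Icc 1 ((n + 1) / 2 - 1),
            (k : ℝ) ^ (σ - 2) * ((n : ℝ) - (k : ℝ) + 1) ^ (-α - 1)
          ≤ C * (n : ℝ) ^ (-(1 + α))) ∧
      (1 < σ ∧ σ ≤ 2 →
        ∑ k ∈ Finset.Icc 1 ((n + 1) / 2 - 1),
            (k : ℝ) ^ (σ - 2) * ((n : ℝ) - (k : ℝ) + 1) ^ (-α - 1)
          ≤ C * (n : ℝ) ^ (-2 - α + σ))) := by
  set T : ℝ := ∑' k : ℕ, (k : ℝ) ^ (σ - 2) with hT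
  have hT0 : 0 ≤ T := tsum_nonneg fun k => Real.rpow_nonneg (Nat.cast_nonneg k) _
  have hM : 0 < max T (1 / (σ - 1)) + 1 := by
    have := le_max_left T (1 / (σ - 1)); linarith
  have hP : (0:ℝ) < 2 ^ (α + 1) := Real.rpow_pos_of_pos two_pos _
  refine ⟨2 ^ (α + 1) * (max T (1 / (σ - 1)) + 1), mul_pos hP hM, ?_⟩
  intro n hn
  set m := (n + 1) / 2 - 1 with hm
  have hn0 : (0:ℝ) < n := by positivity
  have hn0' : (2:ℝ) ≤ n := by exact_mod_cast hn
  have hn2 : (0:ℝ) < (n:ℝ) / 2 := by linarith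
  have hterm : ∀ k ∈ Finset.Icc 1 m, (k:ℝ) ^ (σ - 2) * ((n:ℝ) - (k:ℝ) + 1) ^ (-α - 1)
      ≤ ((n:ℝ)/2) ^ (-α - 1) * (k:ℝ) ^ (σ - 2) := by
    intro k hk
    rw [Finset.mem_Icc] at hk
    have h2k : 2 * k + 1 ≤ n := by omega
    have h2k' : 2 * (k:ℝ) + 1 ≤ (n:ℝ) := by exact_mod_cast h2k
    have hle : (n:ℝ)/2 ≤ (n:ℝ) - (k:ℝ) + 1 := by linarith
    have hb := Real.rpow_le_rpow_of_nonpos hn2 hle (by linarith : -α - 1 ≤ 0)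
    rw [mul_comm]
    exact mul_le_mul_of_nonneg_right hb (Real.rpow_nonneg (Nat.cast_nonneg k) _)
  have hsum : ∑ k ∈ Finset.Icc 1 m, (k:ℝ) ^ (σ - 2) * ((n:ℝ) - (k:ℝ) + 1) ^ (-α - 1)
      ≤ ((n:ℝ)/2) ^ (-α - 1) * ∑ k ∈ Finset.Icc 1 m, (k:ℝ) ^ (σ - 2) := by
    rw [Finset.mul_sum]; exact Finset.sum_le_sum hterm
  have hhalf : ((n:ℝ)/2) ^ (-α - 1) = 2 ^ (α + 1) * (n:ℝ) ^ (-α - 1) := by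
    rw [show ((n:ℝ)/2) = (n:ℝ) * (2:ℝ)⁻¹ from by ring,
      Real.mul_rpow hn0.le (by norm_num : (0:ℝ) ≤ 2⁻¹),
      Real.inv_rpow (by norm_num : (0:ℝ) ≤ 2), ← Real.rpow_neg (by norm_num : (0:ℝ) ≤ 2),
      show -(-α - 1) = α + 1 from by ring, mul_comm]
  have hnpos : (0:ℝ) < (n:ℝ) ^ (-α - 1) := Real.rpow_pos_of_pos hn0 _
  constructor
  · rintro ⟨hσ0, hσ1⟩
    have hsumm : Summable (fun k : ℕ => (k:ℝ) ^ (σ - 2)) :=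
      Real.summable_nat_rpow.2 (by linarith)
    have hpart : ∑ k ∈ Finset.Icc 1 m, (k:ℝ) ^ (σ - 2) ≤ T :=
      Summable.sum_le_tsum _ (fun k _ => Real.rpow_nonneg (Nat.cast_nonneg k) _) hsumm
    have he : (n:ℝ) ^ (-α - 1) = (n:ℝ) ^ (-(1 + α)) := by congr 1; ring
    calc ∑ k ∈ Finset.Icc 1 m, (k:ℝ) ^ (σ - 2) * ((n:ℝ) - (k:ℝ) + 1) ^ (-α - 1)
        ≤ ((n:ℝ)/2) ^ (-α - 1) * ∑ k ∈ Finset.Icc 1 m, (k:ℝ) ^ (σ - 2) := hsum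
      _ ≤ ((n:ℝ)/2) ^ (-α - 1) * T :=
          mul_le_mul_of_nonneg_left hpart (Real.rpow_nonneg hn2.le _)
      _ = 2 ^ (α + 1) * (n:ℝ) ^ (-α - 1) * T := by rw [hhalf]
      _ ≤ 2 ^ (α + 1) * (max T (1 / (σ - 1)) + 1) * (n:ℝ) ^ (-(1 + α)) := by
          rw [← he]
          have hTM : T ≤ max T (1 / (σ - 1)) + 1 := by
            have := le_max_left T (1 / (σ - 1)); linarith
          nlinarith [mul_pos hP hnpos]
  · rintro ⟨hσ1, hσ2⟩
    have hq0 : 0 < σ - 1 := by linarith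
    have hpart0 := sum_rpow_le (σ - 1) hq0 (by linarith) m
    simp only [show σ - 1 - 1 = σ - 2 from by ring] at hpart0
    have hmn : (m:ℝ) ^ (σ - 1) ≤ (n:ℝ) ^ (σ - 1) :=
      Real.rpow_le_rpow (Nat.cast_nonneg m) (by exact_mod_cast (by omega : m ≤ n)) hq0.le
    have hpart : ∑ k ∈ Finset.Icc 1 m, (k:ℝ) ^ (σ - 2) ≤ (n:ℝ) ^ (σ - 1) / (σ - 1) := by
      calc ∑ k ∈ Finset.Icc 1 m, (k:ℝ) ^ (σ - 2) ≤ (m:ℝ) ^ (σ - 1) / (σ - 1) := hpart0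
        _ ≤ (n:ℝ) ^ (σ - 1) / (σ - 1) := by gcongr
    have hpartnn : 0 ≤ ∑ k ∈ Finset.Icc 1 m, (k:ℝ) ^ (σ - 2) :=
      Finset.sum_nonneg fun k _ => Real.rpow_nonneg (Nat.cast_nonneg k) _
    have hE : (n:ℝ) ^ (-α - 1) * (n:ℝ) ^ (σ - 1) = (n:ℝ) ^ (-2 - α + σ) := by
      rw [← Real.rpow_add hn0]; congr 1; ring
    have hEpos : (0:ℝ) < (n:ℝ) ^ (-2 - α + σ) := Real.rpow_pos_of_pos hn0 _
    calc ∑ k ∈ Finset.Icc 1 m, (k:ℝ) ^ (σ - 2) * ((n:ℝ) - (k:ℝ) + 1) ^ (-α - 1)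
        ≤ ((n:ℝ)/2) ^ (-α - 1) * ∑ k ∈ Finset.Icc 1 m, (k:ℝ) ^ (σ - 2) := hsum
      _ ≤ ((n:ℝ)/2) ^ (-α - 1) * ((n:ℝ) ^ (σ - 1) / (σ - 1)) :=
          mul_le_mul_of_nonneg_left hpart (Real.rpow_nonneg hn2.le _)
      _ = 2 ^ (α + 1) * (1 / (σ - 1)) * (n:ℝ) ^ (-2 - α + σ) := by
          rw [hhalf, ← hE]; field_simp
      _ ≤ 2 ^ (α + 1) * (max T (1 / (σ - 1)) + 1) * (n:ℝ) ^ (-2 - α + σ) := by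
          have h1 : 1 / (σ - 1) ≤ max T (1 / (σ - 1)) + 1 := by
            have := le_max_right T (1 / (σ - 1)); linarith
          nlinarith [mul_pos hP hEpos]
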